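/- Key-exchange correctness: let K, G, H, M, N be pairwise-chosen matrices over a commutative ring such that G*M = M*G and H*N = N*H. Define K_l = Σ_{r=0}^{l-1} G^{l-1-r} * K * H^r and K_{l,j} = Σ_{s=0}^{j-1} M^{j-1-s} * K_l * N^s; also define K_j = Σ_{s=0}^{j-1} M^{j-1-s} * K * N^s and K_{j,l} = Σ_{r=0}^{l-1} G^{l-1-r} * K_j * H^r. Then K_{l,j} = K_{j,l}, i.e., Alice and Bob compute the same shared key matrix. -/
import Mathlib

theorem key_exchange_correct {R : Type*} [CommRing R] {n : ℕ}
    (K G H M N : Matrix (Fin n) (Fin n) R)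
    (hGM : G * M = M * G) (hHN : H * N = N * H)
    (l j : ℕ) (hl : 1 ≤ l) (hj : 1 ≤ j) :
    (∑ s ∈ Finset.range j,
        M ^ (j - 1 - s) * (∑ r ∈ Finset.range l, G ^ (l - 1 - r) * K * H ^ r) * N ^ s)
      =
    (∑ r ∈ Finset.range l,
        G ^ (l - 1 - r) * (∑ s ∈ Finset.range j, M ^ (j - 1 - s) * K * N ^ s) * H ^ r) := by
  simp only [Finset.mul_sum, Finset.sum_mul]
  rw [Finset.sum_comm]
  refine Finset.sum_congr rfl fun r _ => Finset.sum_congr rfl fun s _ => ?_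
  have h1 : M ^ (j - 1 - s) * G ^ (l - 1 - r) = G ^ (l - 1 - r) * M ^ (j - 1 - s) :=
    (Commute.pow_pow (Commute.symm hGM) _ _)
  have h2 : H ^ r * N ^ s = N ^ s * H ^ r := (Commute.pow_pow hHN _ _)
  calc M ^ (j - 1 - s) * (G ^ (l - 1 - r) * K * H ^ r) * N ^ s
      = M ^ (j - 1 - s) * G ^ (l - 1 - r) * K * (H ^ r * N ^ s) := by noncomm_ring
    _ = G ^ (l - 1 - r) * M ^ (j - 1 - s) * K * (N ^ s * H ^ r) := by rw [h1, h2]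
    _ = G ^ (l - 1 - r) * (M ^ (j - 1 - s) * K * N ^ s) * H ^ r := by noncomm_ring
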